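/- For any positive integers t, Δ and any graphs H1, H2 each with treewidth at most t and maximum degree at most Δ, the strong product H1 ⊠ H2 has a 4-colouring in which every monochromatic component has at most O(t²Δ²) vertices (a bound depending only on t and Δ, independent of |V(H1 ⊠ H2)|). -/

import Mathlib

open SimpleGraph

universe u v

/-- The strong product of two simple graphs. -/
def StrongProd {α : Type u} {β : Type v} (G : SimpleGraph α) (H : SimpleGraph β) :
    SimpleGraph (α × β) where
  Adj x y := (x.1 = y.1 ∧ H.Adj x.2 y.2) ∨ (x.2 = y.2 ∧ G.Adj x.1 y.1) ∨
    (G.Adj x.1 y.1 ∧ H.Adj x.2 y.2)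
  symm := by
    constructor
    rintro x y (⟨h1, h2⟩ | ⟨h1, h2⟩ | ⟨h1, h2⟩)
    · exact Or.inl ⟨h1.symm, h2.symm⟩
    · exact Or.inr (Or.inl ⟨h1.symm, h2.symm⟩)
    · exact Or.inr (Or.inr ⟨h1.symm, h2.symm⟩)
  loopless := by
    constructor
    rintro x (⟨h1, h2⟩ | ⟨h1, h2⟩ | ⟨h1, h2⟩)
    · exact h2.ne rfl
    · exact h2.ne rfl
    · exact h1.ne rfl

/-- The fan graph `F_n`: a path on `n` vertices (vertices `1,…,n`) together with
one dominant vertex (vertex `0`) adjacent to all path vertices. -/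
def Fan (n : ℕ) : SimpleGraph (Fin (n + 1)) :=
  SimpleGraph.fromRel (fun u v => u = 0 ∨ u.val + 1 = v.val)

/-- The cone over `m` disjoint copies of `G`: `m` pairwise disjoint copies of `G`
together with one new vertex adjacent to every vertex of every copy. -/
def GraphCone {V : Type u} (m : ℕ) (G : SimpleGraph V) :
    SimpleGraph (Option (Fin m × V)) where
  Adj x y :=
    match x, y with
    | none, none => False
    | none, some _ => True
    | some _, none => True
    | some (i, _u), some (j, _v) => i = j ∧ G.Adj _u _v
  symm := by
    constructor
    rintro (_ | ⟨i, u⟩) (_ | ⟨j, v⟩) h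
    · exact h
    · trivial
    · trivial
    · exact ⟨h.1.symm, h.2.symm⟩
  loopless := by
    constructor
    rintro (_ | ⟨i, u⟩) h
    · exact h
    · exact h.2.ne rfl

/-- `G` has a tree-decomposition of width at most `t`. -/
def TreewidthLE {V : Type u} (G : SimpleGraph V) (t : ℕ) : Prop :=
  ∃ (ι : Type) (T : SimpleGraph ι) (W : ι → Finset V),
    T.IsTree ∧
    (∀ ⦃u v : V⦄, G.Adj u v → ∃ x, u ∈ W x ∧ v ∈ W x) ∧
    (∀ v : V, (T.induce {x | v ∈ W x}).Connected) ∧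
    (∀ x, (W x).card ≤ t + 1)

/-- A set of vertices is monochromatic under a colouring `f`. -/
def IsMonochromatic {V : Type u} {c : ℕ} (f : V → Fin c) (S : Finset V) : Prop :=
  ∀ u ∈ S, ∀ v ∈ S, f u = f v

/-- Every monochromatic component of the colouring `f` of `G` has at most `k` vertices. -/
def ClusterLE {V : Type u} {c : ℕ} (G : SimpleGraph V) (f : V → Fin c) (k : ℕ) : Prop :=
  ∀ S : Finset V, IsMonochromatic f S → (G.induce (S : Set V)).Connected → S.card ≤ k

/-- Every monochromatic component of the colouring `f` of `G` has at most `b` vertices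
(real-valued bound). -/
def ClusterLEReal {V : Type u} {c : ℕ} (G : SimpleGraph V) (f : V → Fin c) (b : ℝ) : Prop :=
  ∀ S : Finset V, IsMonochromatic f S → (G.induce (S : Set V)).Connected → (S.card : ℝ) ≤ b

attribute [local instance] Classical.propDecidable

section RW

variable {α : Type*} {G : SimpleGraph α}

/-- Reachable within a set of vertices. -/
def RW (G : SimpleGraph α) (U : Set α) (a b : α) : Prop :=
  ∃ p : G.Walk a b, ∀ x ∈ p.support, x ∈ U

theorem RW.left_mem {U : Set α} {a b : α} (h : RW G U a b) : a ∈ U := by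
  obtain ⟨p, hp⟩ := h; exact hp a p.start_mem_support

theorem RW.right_mem {U : Set α} {a b : α} (h : RW G U a b) : b ∈ U := by
  obtain ⟨p, hp⟩ := h; exact hp b p.end_mem_support

theorem RW.refl {U : Set α} {a : α} (h : a ∈ U) : RW G U a a :=
  ⟨Walk.nil, by simp [h]⟩

theorem RW.symm {U : Set α} {a b : α} (h : RW G U a b) : RW G U b a := by
  obtain ⟨p, hp⟩ := h
  exact ⟨p.reverse, by intro x hx; exact hp x (by simpa using hx)⟩

theorem RW.trans {U : Set α} {a b c : α} (h : RW G U a b) (h' : RW G U b c) :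
    RW G U a c := by
  obtain ⟨p, hp⟩ := h; obtain ⟨q, hq⟩ := h'
  refine ⟨p.append q, ?_⟩
  intro x hx
  rcases (Walk.mem_support_append_iff _ _).mp hx with h | h
  · exact hp x h
  · exact hq x h

theorem RW.mono {U U' : Set α} (hUU : U ⊆ U') {a b : α} (h : RW G U a b) :
    RW G U' a b := by
  obtain ⟨p, hp⟩ := h; exact ⟨p, fun x hx => hUU (hp x hx)⟩

theorem RW.of_adj {U : Set α} {a b : α} (h : G.Adj a b) (ha : a ∈ U) (hb : b ∈ U) :
    RW G U a b :=
  ⟨Walk.cons h Walk.nil, by intro x hx; simp at hx; rcases hx with rfl | rfl <;> assumption⟩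

theorem RW.cons {U : Set α} {a b c : α} (h : G.Adj a b) (ha : a ∈ U) (h' : RW G U b c) :
    RW G U a c :=
  (RW.of_adj h ha h'.left_mem).trans h'

/-- A walk in an induced subgraph gives reachability within the set. -/
theorem rw_of_induce_walk {s : Set α} {a b : s} (p : (G.induce s).Walk a b) :
    RW G s (a : α) (b : α) := by
  induction p with
  | nil => exact RW.refl (Subtype.coe_prop _)
  | cons h q ih => exact RW.cons h (Subtype.coe_prop _) ih

theorem rw_of_induce_connected {s : Set α} (h : (G.induce s).Connected)
    {a b : α} (ha : a ∈ s) (hb : b ∈ s) : RW G s a b := by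
  obtain ⟨p⟩ := h.preconnected ⟨a, ha⟩ ⟨b, hb⟩
  exact rw_of_induce_walk p

end RW

section Tree

variable {ι : Type*} {T : SimpleGraph ι}

/-- In a tree, a vertex cannot be reachable from both endpoints of an edge avoiding
the other endpoint. -/
theorem tree_sides_disjoint (hT : T.IsTree) {x y z : ι} (hxy : T.Adj x y)
    (hA : RW T {w | w ≠ x} y z) (hB : RW T {w | w ≠ y} x z) : False := by
  obtain ⟨pA, hpA⟩ := hA
  obtain ⟨pB, hpB⟩ := hB
  have hxA : x ∉ pA.bypass.support := by
    intro hx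
    exact (hpA x (pA.support_bypass_subset hx)) rfl
  have hyB : y ∉ pB.bypass.support := by
    intro hy
    exact (hpB y (pB.support_bypass_subset hy)) rfl
  have hunique := (isAcyclic_iff_path_unique.mp hT.IsAcyclic)
    (⟨Walk.cons hxy.symm pB.bypass, (Walk.cons_isPath_iff _ _).mpr ⟨pB.bypass_isPath, hyB⟩⟩ : T.Path y z)
    ⟨pA.bypass, pA.bypass_isPath⟩
  have hxmem : x ∈ (Walk.cons hxy.symm pB.bypass).support := by
    simp [Walk.support_cons]
  rw [show (Walk.cons hxy.symm pB.bypass) = pA.bypass from congrArg Subtype.val hunique] at hxmem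
  exact hxA hxmem

end Tree



section Comp

variable {V : Type*} [Fintype V] (G : SimpleGraph V)

/-- The connected component of `v` within the finset `U`. -/
noncomputable def gcmp (U : Finset V) (v : V) : Finset V :=
  U.filter (fun w => RW G ↑U v w)

variable {G}

theorem mem_gcmp {U : Finset V} {v w : V} : w ∈ gcmp G U v ↔ RW G ↑U v w := by
  constructor
  · intro h
    exact (Finset.mem_filter.mp h).2
  · intro h
    exact Finset.mem_filter.mpr ⟨by exact_mod_cast h.right_mem, h⟩

theorem gcmp_subset {U : Finset V} {v : V} : gcmp G U v ⊆ U := Finset.filter_subset _ _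

theorem self_mem_gcmp {U : Finset V} {v : V} (h : v ∈ U) : v ∈ gcmp G U v :=
  mem_gcmp.mpr (RW.refl (by exact_mod_cast h))

theorem gcmp_eq_of_mem {U : Finset V} {v w : V} (h : w ∈ gcmp G U v) :
    gcmp G U w = gcmp G U v := by
  ext z
  simp only [mem_gcmp] at *
  exact ⟨fun hz => h.trans hz, fun hz => h.symm.trans hz⟩

theorem rw_of_mem_gcmp {U : Finset V} {v w₁ w₂ : V} (h1 : w₁ ∈ gcmp G U v)
    (h2 : w₂ ∈ gcmp G U v) : RW G ↑U w₁ w₂ :=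
  (mem_gcmp.mp h1).symm.trans (mem_gcmp.mp h2)

/-- The witnessing walk can be taken within the component. -/
theorem rw_within_gcmp {U : Finset V} {v w : V} (h : w ∈ gcmp G U v) :
    RW G ↑(gcmp G U v) v w := by
  classical
  obtain ⟨p, hp⟩ := mem_gcmp.mp h
  refine ⟨p, fun x hx => ?_⟩
  have : RW G ↑U v x := ⟨p.takeUntil x hx, fun y hy => hp y (p.support_takeUntil_subset hx hy)⟩
  exact_mod_cast mem_gcmp.mpr this

theorem rw_within_gcmp' {U : Finset V} {v w₁ w₂ : V} (h1 : w₁ ∈ gcmp G U v)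
    (h2 : w₂ ∈ gcmp G U v) : RW G ↑(gcmp G U v) w₁ w₂ := by
  have e1 := rw_within_gcmp h1
  have e2 := rw_within_gcmp h2
  exact e1.symm.trans e2

/-- Components are closed under adjacency within `U`. -/
theorem adj_mem_gcmp {U : Finset V} {v z w : V} (hz : z ∈ gcmp G U v) (h : G.Adj z w)
    (hw : w ∈ U) : w ∈ gcmp G U v :=
  mem_gcmp.mpr ((mem_gcmp.mp hz).trans (RW.of_adj h (by exact_mod_cast gcmp_subset hz) (by exact_mod_cast hw)))

theorem gcmp_disjoint {U : Finset V} {v w : V} (h : gcmp G U v ≠ gcmp G U w) :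
    Disjoint (gcmp G U v) (gcmp G U w) := by
  rw [Finset.disjoint_left]
  intro z hzv hzw
  exact h ((gcmp_eq_of_mem hzv).symm.trans (gcmp_eq_of_mem hzw))

/-- Sum of intersections with pairwise distinct components is at most the total. -/
theorem sum_card_inter_gcmp_le {U : Finset V} (X : Finset V) (𝒞 : Finset (Finset V))
    (h𝒞 : ∀ C ∈ 𝒞, ∃ v, C = gcmp G U v) :
    ∑ C ∈ 𝒞, (X ∩ C).card ≤ X.card := by
  classical
  have hdisj : ∀ C₁ ∈ 𝒞, ∀ C₂ ∈ 𝒞, C₁ ≠ C₂ → Disjoint (X ∩ C₁) (X ∩ C₂) := by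
    intro C₁ h₁ C₂ h₂ hne
    obtain ⟨v₁, rfl⟩ := h𝒞 C₁ h₁
    obtain ⟨v₂, rfl⟩ := h𝒞 C₂ h₂
    exact Finset.disjoint_of_subset_left Finset.inter_subset_right
      (Finset.disjoint_of_subset_right Finset.inter_subset_right (gcmp_disjoint hne))
  rw [← Finset.card_biUnion hdisj]
  exact Finset.card_le_card (fun x hx => by
    simp only [Finset.mem_biUnion] at hx
    obtain ⟨C, _, hxC⟩ := hx
    exact (Finset.mem_inter.mp hxC).1)

variable (G)

/-- The neighbourhood of a finset. -/
noncomputable def nbrs (X : Finset V) : Finset V :=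
  Finset.univ.filter (fun w => ∃ x ∈ X, G.Adj x w)

variable {G}

theorem mem_nbrs {X : Finset V} {w : V} : w ∈ nbrs G X ↔ ∃ x ∈ X, G.Adj x w := by
  simp [nbrs]

theorem nbrs_union {X Y : Finset V} : nbrs G (X ∪ Y) = nbrs G X ∪ nbrs G Y := by
  ext w
  simp only [mem_nbrs, Finset.mem_union]
  constructor
  · rintro ⟨x, hx | hx, hadj⟩
    · exact Or.inl ⟨x, hx, hadj⟩
    · exact Or.inr ⟨x, hx, hadj⟩
  · rintro (⟨x, hx, hadj⟩ | ⟨x, hx, hadj⟩)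
    · exact ⟨x, Or.inl hx, hadj⟩
    · exact ⟨x, Or.inr hx, hadj⟩

theorem nbrs_card_le {d : ℕ} (hdeg : ∀ v : V, (G.neighborSet v).ncard ≤ d)
    (X : Finset V) : (nbrs G X).card ≤ X.card * d := by
  classical
  have hsub : nbrs G X ⊆ X.biUnion (fun x => Finset.univ.filter (fun w => G.Adj x w)) := by
    intro w hw
    obtain ⟨x, hx, hadj⟩ := mem_nbrs.mp hw
    exact Finset.mem_biUnion.mpr ⟨x, hx, by simp [hadj]⟩
  calc (nbrs G X).card ≤ _ := Finset.card_le_card hsub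
    _ ≤ ∑ x ∈ X, (Finset.univ.filter (fun w => G.Adj x w)).card := Finset.card_biUnion_le
    _ ≤ ∑ _x ∈ X, d := by
        refine Finset.sum_le_sum (fun x _ => ?_)
        have : (Finset.univ.filter (fun w => G.Adj x w)) = (G.neighborSet x).toFinset := by
          ext w; simp only [Set.mem_toFinset]; simp [SimpleGraph.neighborSet]
        rw [this, ← Set.ncard_eq_toFinset_card']
        exact hdeg x
    _ = X.card * d := by simp [Finset.sum_const, Nat.smul_one_eq_cast, mul_comm]

end Comp

section Separator

variable {V : Type*} [Fintype V] {G : SimpleGraph V}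
variable {ι : Type*} {T : SimpleGraph ι} {Wb : ι → Finset V}

theorem trace_rw (hTrace : ∀ v : V, (T.induce {x | v ∈ Wb x}).Connected)
    {u : V} {z z' : ι} (hz : u ∈ Wb z) (hz' : u ∈ Wb z') :
    RW T {i | u ∈ Wb i} z z' :=
  rw_of_induce_connected (hTrace u) hz hz'

theorem trace_nonempty (hTrace : ∀ v : V, (T.induce {x | v ∈ Wb x}).Connected)
    (u : V) : ∃ z, u ∈ Wb z := by
  have := (hTrace u).nonempty
  obtain ⟨⟨z, hz⟩⟩ := this
  exact ⟨z, hz⟩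

/-- Chain lemma: a walk in `G` avoiding the bag of `x` links the traces of its
endpoints in the tree, avoiding `x`. -/
theorem trace_chain (hEdge : ∀ ⦃u v : V⦄, G.Adj u v → ∃ x, u ∈ Wb x ∧ v ∈ Wb x)
    (hTrace : ∀ v : V, (T.induce {x | v ∈ Wb x}).Connected)
    {x : ι} : ∀ {u w : V} (p : G.Walk u w), (∀ y ∈ p.support, y ∉ Wb x) →
    ∀ {z z' : ι}, u ∈ Wb z → w ∈ Wb z' → RW T {y | y ≠ x} z z' := by
  intro u w p
  induction p with
  | nil =>
    intro hsup z z' hz hz'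
    refine (trace_rw hTrace hz hz').mono ?_
    intro i hi
    simp only [Set.mem_setOf_eq] at hi ⊢
    intro h
    subst h
    exact hsup _ (by simp) hi
  | @cons a b c h q ih =>
    intro hsup z z' hz hz'
    obtain ⟨x₁, hax₁, hbx₁⟩ := hEdge h
    have haX : a ∉ Wb x := hsup a (by simp)
    have step1 : RW T {y | y ≠ x} z x₁ := by
      refine (trace_rw hTrace hz hax₁).mono ?_
      intro i hi
      simp only [Set.mem_setOf_eq] at hi ⊢
      intro h
      subst h
      exact haX hi
    have step2 : RW T {y | y ≠ x} x₁ z' := by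
      refine ih ?_ hbx₁ hz'
      intro y hy
      exact hsup y (by simp [Walk.support_cons]; tauto)
    exact step1.trans step2

/-- The balanced-bag lemma: some bag of the tree decomposition splits `U` into
components of at most half the total weight. -/
theorem exists_balanced_bag (hT : T.IsTree)
    (hEdge : ∀ ⦃u v : V⦄, G.Adj u v → ∃ x, u ∈ Wb x ∧ v ∈ Wb x)
    (hTrace : ∀ v : V, (T.induce {x | v ∈ Wb x}).Connected)
    (U : Finset V) (wt : V → ℕ) :
    ∃ x : ι, ∀ v ∈ U \ Wb x,
      2 * ∑ w ∈ gcmp G (U \ Wb x) v, wt w ≤ ∑ u ∈ U, wt u := by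
  classical
  by_contra hcon
  push_neg at hcon
  choose vf hvf hgt using hcon
  -- vf x ∈ U \ Wb x, and its component is heavy
  set Wtot := ∑ u ∈ U, wt u with hWtot
  set Cx : ι → Finset V := fun x => gcmp G (U \ Wb x) (vf x) with hCx
  have hCsub : ∀ x, Cx x ⊆ U \ Wb x := fun x => gcmp_subset
  have hCmem : ∀ x, vf x ∈ Cx x := fun x => self_mem_gcmp (hvf x)
  have hheavy : ∀ x, Wtot < 2 * ∑ w ∈ Cx x, wt w := hgt
  -- overlap of any two heavy components
  have hoverlap : ∀ x y : ι, ∃ v', v' ∈ Cx x ∧ v' ∈ Cx y := by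
    intro x y
    by_contra hdis
    push_neg at hdis
    have hdisj : Disjoint (Cx x) (Cx y) := by
      rw [Finset.disjoint_left]
      intro a ha ha'
      exact hdis a ha ha'
    have hsum : ∑ w ∈ Cx x, wt w + ∑ w ∈ Cx y, wt w ≤ Wtot := by
      rw [← Finset.sum_union hdisj]
      apply Finset.sum_le_sum_of_subset
      intro a ha
      rcases Finset.mem_union.mp ha with h | h
      · exact (Finset.mem_sdiff.mp (hCsub x h)).1
      · exact (Finset.mem_sdiff.mp (hCsub y h)).1
    have h1 := hheavy x
    have h2 := hheavy y
    omega
  -- the `D` sets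
  set Dx : ι → Set ι := fun x => {z | ∃ v ∈ Cx x, v ∈ Wb z} with hDx
  have hDne : ∀ x, (Dx x).Nonempty := by
    intro x
    obtain ⟨z, hz⟩ := trace_nonempty hTrace (vf x)
    exact ⟨z, vf x, hCmem x, hz⟩
  have hxD : ∀ x, x ∉ Dx x := by
    rintro x ⟨v, hv, hvW⟩
    exact (Finset.mem_sdiff.mp (hCsub x hv)).2 hvW
  have hconn : T.Connected := hT.isConnected
  -- distances
  set m : ι → ℕ := fun x => sInf ((fun z => T.dist x z) '' Dx x) with hm
  have hmmem : ∀ x, ∃ z ∈ Dx x, T.dist x z = m x := by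
    intro x
    have : ((fun z => T.dist x z) '' Dx x).Nonempty := (hDne x).image _
    have := Nat.sInf_mem this
    obtain ⟨z, hz, hdz⟩ := this
    exact ⟨z, hz, hdz⟩
  have hne : Nonempty ι := hconn.nonempty
  -- minimize card then m
  set cset : Set ℕ := {n | ∃ x, (Cx x).card = n} with hcset
  have hcsetne : cset.Nonempty := ⟨_, Classical.arbitrary ι, rfl⟩
  set c₀ := sInf cset with hc₀
  obtain ⟨x₁, hx₁⟩ := Nat.sInf_mem hcsetne
  set mset : Set ℕ := {n | ∃ x, (Cx x).card = c₀ ∧ m x = n} with hmset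
  have hmsetne : mset.Nonempty := ⟨m x₁, x₁, hx₁, rfl⟩
  obtain ⟨x, hxc, hxm⟩ := Nat.sInf_mem hmsetne
  set m₀ := sInf mset with hm₀
  -- the nearest node of `Dx x`
  obtain ⟨zst, hzst, hdzst⟩ := hmmem x
  have hm0pos : 1 ≤ m x := by
    rcases Nat.eq_zero_or_pos (m x) with h0 | h; swap
    · exact h
    exfalso
    rw [h0] at hdzst
    have : x = zst := (hconn.dist_eq_zero_iff).mp hdzst
    exact hxD x (this ▸ hzst)
  -- a geodesic from x to zst
  obtain ⟨p, hp⟩ := (hconn.preconnected x zst).exists_walk_length_eq_dist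
  rw [hdzst] at hp
  -- p is not nil
  cases p with
  | nil => simp at hp; omega
  | @cons _ y _ hxy q =>
    have hqlen : q.length = m x - 1 := by
      simp [Walk.length_cons] at hp; omega
    have hxq : x ∉ q.support := by
      intro hmem
      have hle := Walk.length_dropUntil_le q hmem
      have hdle : T.dist x zst ≤ (q.dropUntil x hmem).length := SimpleGraph.dist_le _
      omega
    have hyzst : RW T {w | w ≠ x} y zst := ⟨q, by intro a ha h; exact hxq (h ▸ ha)⟩
    -- overlap vertex
    obtain ⟨v', hv'x, hv'y⟩ := hoverlap x y
    have hv'Wx : v' ∉ Wb x := (Finset.mem_sdiff.mp (hCsub x hv'x)).2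
    have hv'Wy : v' ∉ Wb y := (Finset.mem_sdiff.mp (hCsub y hv'y)).2
    -- Claim: C y avoids the bag of x
    have hclaim : ∀ v ∈ Cx y, v ∉ Wb x := by
      intro v hv hvWbx
      -- chain within C y from v' to v, avoiding Wb y
      obtain ⟨z₀, hz₀⟩ := trace_nonempty hTrace v'
      have hrw1 : RW G ↑(U \ Wb y) v' v := rw_of_mem_gcmp hv'y hv
      obtain ⟨p₁, hp₁⟩ := hrw1
      have hch1 : RW T {w | w ≠ y} z₀ x := by
        refine trace_chain hEdge hTrace p₁ ?_ hz₀ hvWbx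
        intro a ha
        have := hp₁ a ha
        simp only [Finset.coe_sdiff, Set.mem_diff, Finset.mem_coe] at this
        exact this.2
      -- chain within C x from v' to u*, avoiding Wb x, reaching zst
      obtain ⟨ust, hust, hustW⟩ := hzst
      have hrw2 : RW G ↑(U \ Wb x) v' ust := rw_of_mem_gcmp hv'x hust
      obtain ⟨p₂, hp₂⟩ := hrw2
      have hch2 : RW T {w | w ≠ x} z₀ zst := by
        refine trace_chain hEdge hTrace p₂ ?_ hz₀ hustW
        intro a ha
        have := hp₂ a ha
        simp only [Finset.coe_sdiff, Set.mem_diff, Finset.mem_coe] at this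
        exact this.2
      -- combine: RW T {≠x} y z₀ and RW T {≠y} x z₀
      have hA : RW T {w | w ≠ x} y z₀ := hyzst.trans hch2.symm
      have hB : RW T {w | w ≠ y} x z₀ := hch1.symm
      exact tree_sides_disjoint hT hxy hA hB
    -- Case A : C y ⊆ C x
    have hsubxy : Cx y ⊆ Cx x := by
      intro w hw
      have hrw : RW G ↑(Cx y) v' w := rw_within_gcmp' hv'y hw
      have hrw' : RW G ↑(U \ Wb x) v' w := by
        refine hrw.mono ?_
        intro a ha
        simp only [Finset.mem_coe] at ha
        have haU : a ∈ U := (Finset.mem_sdiff.mp (hCsub y ha)).1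
        simp only [Finset.coe_sdiff, Set.mem_diff, Finset.mem_coe]
        exact ⟨haU, hclaim a ha⟩
      have : w ∈ gcmp G (U \ Wb x) v' := mem_gcmp.mpr hrw'
      rwa [gcmp_eq_of_mem hv'x] at this
    have hcard_le : c₀ ≤ (Cx y).card := Nat.sInf_le ⟨y, rfl⟩
    have hcardxy : (Cx y).card ≤ (Cx x).card := Finset.card_le_card hsubxy
    have heq : Cx y = Cx x := Finset.eq_of_subset_of_card_le hsubxy (by omega)
    -- Then m y < m x, contradiction with minimality
    have hzstDy : zst ∈ Dx y := by
      obtain ⟨ust, hust, hustW⟩ := hzst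
      exact ⟨ust, heq ▸ hust, hustW⟩
    have hyd : T.dist y zst ≤ m x - 1 := by
      have := SimpleGraph.dist_le q
      omega
    have hmy : m y ≤ m x - 1 := le_trans (Nat.sInf_le ⟨zst, hzstDy, rfl⟩) hyd
    have hmyge : m₀ ≤ m y := Nat.sInf_le ⟨y, by rw [heq, hxc], rfl⟩
    omega

end Separator

section Split

variable {V : Type*} [Fintype V] (G : SimpleGraph V)

/-- The set of connected components of a finset. -/
noncomputable def compsOf (A : Finset V) : Finset (Finset V) :=
  A.image (fun v => gcmp G A v)

variable {G}

theorem mem_compsOf {A C : Finset V} : C ∈ compsOf G A ↔ ∃ v ∈ A, C = gcmp G A v := by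
  simp [compsOf, eq_comm]

theorem rw_inter_gcmp {A B : Finset V} (hBA : B ⊆ A) {v w : V} (h : RW G ↑B v w) :
    RW G ↑(B ∩ gcmp G A v) v w := by
  classical
  obtain ⟨p, hp⟩ := h
  refine ⟨p, fun x hx => ?_⟩
  have hxB : x ∈ B := by exact_mod_cast hp x hx
  have hrwA : RW G ↑A v x := by
    refine RW.mono ?_ ⟨p.takeUntil x hx, fun y hy => hp y (p.support_takeUntil_subset hx hy)⟩
    exact_mod_cast hBA
  have : x ∈ gcmp G A v := mem_gcmp.mpr hrwA
  exact_mod_cast Finset.mem_inter.mpr ⟨hxB, this⟩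

/-- Removing vertices outside a component does not change it. -/
theorem gcmp_sdiff_eq {A Z : Finset V} {v : V} (hv : v ∈ A) (hvZ : v ∉ Z)
    (hZ : ∀ w ∈ gcmp G A v, w ∉ Z) : gcmp G (A \ Z) v = gcmp G A v := by
  ext w
  simp only [mem_gcmp]
  constructor
  · intro h
    exact h.mono (by intro a ha; simp only [Finset.coe_sdiff, Set.mem_diff, Finset.mem_coe] at ha; exact_mod_cast ha.1)
  · intro h
    have h2 := rw_inter_gcmp (le_refl A) h
    refine h2.mono ?_
    intro a ha
    simp only [Finset.coe_inter, Set.mem_inter_iff, Finset.mem_coe] at ha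
    simp only [Finset.coe_sdiff, Set.mem_diff, Finset.mem_coe]
    exact ⟨by exact_mod_cast gcmp_subset ha.2, hZ a ha.2⟩

/-- Components inside a split piece of a component. -/
theorem gcmp_piece_eq {A Z : Finset V} {v₀ v : V} (hv₀ : v₀ ∈ A)
    (hv : v ∈ gcmp G A v₀ \ Z) :
    gcmp G (A \ Z) v = gcmp G (gcmp G A v₀ \ Z) v := by
  have hvC : v ∈ gcmp G A v₀ := (Finset.mem_sdiff.mp hv).1
  have hvZ : v ∉ Z := (Finset.mem_sdiff.mp hv).2
  have hCA : gcmp G A v₀ ⊆ A := gcmp_subset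
  ext w
  simp only [mem_gcmp]
  constructor
  · intro h
    have h2 := rw_inter_gcmp (A := A) (Finset.sdiff_subset) (v := v) (w := w) h
    have hveq : gcmp G A v = gcmp G A v₀ := gcmp_eq_of_mem hvC
    rw [hveq] at h2
    have hset : (A \ Z) ∩ gcmp G A v₀ = gcmp G A v₀ \ Z := by
      ext a
      simp only [Finset.mem_inter, Finset.mem_sdiff]
      constructor
      · rintro ⟨⟨_, hz⟩, hc⟩; exact ⟨hc, hz⟩
      · rintro ⟨hc, hz⟩; exact ⟨⟨hCA hc, hz⟩, hc⟩
    rwa [hset] at h2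
  · intro h
    refine h.mono ?_
    intro a ha
    simp only [Finset.coe_sdiff, Set.mem_diff, Finset.mem_coe] at ha ⊢
    exact ⟨hCA ha.1, ha.2⟩

theorem indicator_sum (D S : Finset V) :
    ∑ w ∈ D, (if w ∈ S then 1 else 0) = (D ∩ S).card := by
  rw [Finset.sum_ite_mem]
  simp

/-- Decomposition of components after removing a separator `Z` inside the component `C₀`. -/
theorem compsOf_split {A Z : Finset V} {v₀ : V} (hv₀ : v₀ ∈ A)
    (hZ : Z ⊆ gcmp G A v₀) :
    compsOf G (A \ Z) = ((compsOf G A).erase (gcmp G A v₀)) ∪ compsOf G (gcmp G A v₀ \ Z) ∧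
    Disjoint ((compsOf G A).erase (gcmp G A v₀)) (compsOf G (gcmp G A v₀ \ Z)) := by
  classical
  set C₀ := gcmp G A v₀ with hC₀
  have hC₀A : C₀ ⊆ A := gcmp_subset
  have hAZ : A \ Z = ((A \ C₀) ∪ (C₀ \ Z)) := by
    ext a
    simp only [Finset.mem_sdiff, Finset.mem_union]
    constructor
    · rintro ⟨ha, hz⟩
      by_cases hc : a ∈ C₀
      · exact Or.inr ⟨hc, hz⟩
      · exact Or.inl ⟨ha, hc⟩
    · rintro (⟨ha, hc⟩ | ⟨hc, hz⟩)
      · exact ⟨ha, fun hzz => hc (hZ hzz)⟩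
      · exact ⟨hC₀A hc, hz⟩
  constructor
  · rw [compsOf, hAZ, Finset.image_union]
    congr 1
    · -- image over A \ C₀ equals erase C₀
      ext C
      simp only [Finset.mem_image, Finset.mem_erase]
      constructor
      · rintro ⟨v, hv, rfl⟩
        have hvA : v ∈ A := (Finset.mem_sdiff.mp hv).1
        have hvC : v ∉ C₀ := (Finset.mem_sdiff.mp hv).2
        have hvZ : v ∉ Z := fun hz => hvC (hZ hz)
        have hdis : ∀ w ∈ gcmp G A v, w ∉ Z := by
          intro w hw hz
          have hwC : w ∈ gcmp G A v₀ := hC₀ ▸ hZ hz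
          have h1 : gcmp G A w = gcmp G A v := gcmp_eq_of_mem hw
          have h2 : gcmp G A w = gcmp G A v₀ := gcmp_eq_of_mem hwC
          exact hvC (by rw [hC₀, ← h2, h1]; exact self_mem_gcmp hvA)
        have heq : gcmp G ((A \ C₀) ∪ (C₀ \ Z)) v = gcmp G A v := by
          rw [← hAZ]; exact gcmp_sdiff_eq hvA hvZ hdis
        rw [heq]
        refine ⟨?_, mem_compsOf.mpr ⟨v, hvA, rfl⟩⟩
        intro hEq
        exact hvC (hEq ▸ self_mem_gcmp hvA)
      · rintro ⟨hne, hC⟩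
        obtain ⟨v, hvA, rfl⟩ := mem_compsOf.mp hC
        have hvC : v ∉ C₀ := by
          intro hv
          exact hne ((gcmp_eq_of_mem hv).symm ▸ rfl)
        have hvZ : v ∉ Z := fun hz => hvC (hZ hz)
        have hdis : ∀ w ∈ gcmp G A v, w ∉ Z := by
          intro w hw hz
          have hwC : w ∈ gcmp G A v₀ := hC₀ ▸ hZ hz
          have h1 : gcmp G A w = gcmp G A v := gcmp_eq_of_mem hw
          have h2 : gcmp G A w = gcmp G A v₀ := gcmp_eq_of_mem hwC
          exact hvC (by rw [hC₀, ← h2, h1]; exact self_mem_gcmp hvA)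
        refine ⟨v, Finset.mem_sdiff.mpr ⟨hvA, hvC⟩, ?_⟩
        rw [← hAZ]
        exact gcmp_sdiff_eq hvA hvZ hdis
    · -- image over C₀ \ Z equals compsOf (C₀ \ Z)
      refine Finset.image_congr ?_
      intro v hv
      rw [← hAZ]
      exact gcmp_piece_eq hv₀ hv
  · rw [Finset.disjoint_left]
    intro C hC hC'
    obtain ⟨hne, hCA⟩ := Finset.mem_erase.mp hC
    obtain ⟨v, hvA, rfl⟩ := mem_compsOf.mp hCA
    obtain ⟨w, hw, hEq⟩ := mem_compsOf.mp hC'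
    have hvC : v ∈ gcmp G A v := self_mem_gcmp hvA
    rw [hEq] at hvC
    have : v ∈ C₀ := (Finset.mem_sdiff.mp (gcmp_subset hvC)).1
    exact hne (gcmp_eq_of_mem this)

/-- Neighbours of `Z ⊆ C₀` do not meet other components. -/
theorem nbrs_sep_other {A Z : Finset V} {v₀ : V} (hv₀ : v₀ ∈ A)
    (hZ : Z ⊆ gcmp G A v₀) {C : Finset V}
    (hC : C ∈ (compsOf G A).erase (gcmp G A v₀)) :
    nbrs G Z ∩ C = ∅ := by
  classical
  obtain ⟨hne, hCA⟩ := Finset.mem_erase.mp hC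
  obtain ⟨v, hvA, rfl⟩ := mem_compsOf.mp hCA
  rw [Finset.eq_empty_iff_forall_notMem]
  intro w hw
  obtain ⟨hw1, hw2⟩ := Finset.mem_inter.mp hw
  obtain ⟨z, hz, hadj⟩ := mem_nbrs.mp hw1
  have hzC₀ : z ∈ gcmp G A v₀ := hZ hz
  have hwC₀ : w ∈ gcmp G A v₀ := adj_mem_gcmp hzC₀ hadj (gcmp_subset hw2)
  exact hne ((gcmp_eq_of_mem hw2).symm.trans (gcmp_eq_of_mem hwC₀))

/-- The key splitting lemma: we can enlarge `R` so that every component of the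
complement has small boundary. -/
theorem split_lemma {k d : ℕ} (hk : 1 ≤ k) (hd : 1 ≤ d)
    (hSep : ∀ (U' : Finset V) (wt : V → ℕ), ∃ Z : Finset V, Z ⊆ U' ∧ Z.card ≤ k ∧
      ∀ v ∈ U' \ Z, 2 * ∑ w ∈ gcmp G (U' \ Z) v, wt w ≤ ∑ u ∈ U', wt u)
    (hdeg : ∀ X : Finset V, (nbrs G X).card ≤ X.card * d) :
    ∀ (p : ℕ) (U R : Finset V), R ⊆ U →
    (∑ C ∈ compsOf G (U \ R), ((nbrs G R ∩ C).card - 2 * (k * d))) ≤ p * (k * d) →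
    ∃ R', R ⊆ R' ∧ R' ⊆ U ∧ R'.card ≤ R.card + k * p ∧
      ∀ v ∈ U \ R', ((nbrs G R') ∩ gcmp G (U \ R') v).card ≤ 6 * (k * d) := by
  classical
  intro p
  induction p with
  | zero =>
    intro U R hRU hΨ
    refine ⟨R, le_refl R, hRU, by omega, ?_⟩
    intro v hv
    by_contra hbig
    push_neg at hbig
    have hmem : gcmp G (U \ R) v ∈ compsOf G (U \ R) := mem_compsOf.mpr ⟨v, hv, rfl⟩
    have hle : ((nbrs G R ∩ gcmp G (U \ R) v).card - 2 * (k * d)) ≤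
        ∑ C ∈ compsOf G (U \ R), ((nbrs G R ∩ C).card - 2 * (k * d)) :=
      Finset.single_le_sum (f := fun C => (nbrs G R ∩ C).card - 2 * (k * d))
        (fun _ _ => Nat.zero_le _) hmem
    omega
  | succ p ih =>
    intro U R hRU hΨ
    by_cases hdone : ∀ v ∈ U \ R, ((nbrs G R) ∩ gcmp G (U \ R) v).card ≤ 6 * (k * d)
    · exact ⟨R, le_refl R, hRU, by nlinarith, hdone⟩
    push_neg at hdone
    obtain ⟨v₀, hv₀, hbig⟩ := hdone
    set A := U \ R with hA
    set C₀ := gcmp G A v₀ with hC₀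
    set X := nbrs G R with hX
    set s₀ := (X ∩ C₀).card with hs₀
    have hbig' : 6 * (k * d) < s₀ := hbig
    -- separator inside C₀ balanced w.r.t. the seed
    obtain ⟨Z, hZC₀, hZcard, hbal⟩ := hSep C₀ (fun w => if w ∈ X ∩ C₀ then 1 else 0)
    have hC₀tot : ∑ u ∈ C₀, (fun w => if w ∈ X ∩ C₀ then 1 else 0) u = s₀ := by
      rw [indicator_sum]
      congr 1
      ext a
      simp only [Finset.mem_inter]
      tauto
    -- balance in card form
    have hbal' : ∀ v ∈ C₀ \ Z, 2 * (X ∩ gcmp G (C₀ \ Z) v).card ≤ s₀ := by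
      intro v hv
      have := hbal v hv
      rw [hC₀tot, indicator_sum] at this
      have heq : (gcmp G (C₀ \ Z) v ∩ (X ∩ C₀)) = X ∩ gcmp G (C₀ \ Z) v := by
        ext a
        simp only [Finset.mem_inter]
        constructor
        · rintro ⟨h1, h2, _⟩; exact ⟨h2, h1⟩
        · rintro ⟨h1, h2⟩
          exact ⟨h2, h1, (Finset.mem_sdiff.mp (gcmp_subset h2)).1⟩
      rwa [heq] at this
    set R₁ := R ∪ Z with hR₁
    have hZA : Z ⊆ A := fun z hz => gcmp_subset (hZC₀ hz)
    have hR₁U : R₁ ⊆ U := by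
      intro a ha
      rcases Finset.mem_union.mp ha with h | h
      · exact hRU h
      · exact (Finset.mem_sdiff.mp (hZA h)).1
    have hUR₁ : U \ R₁ = A \ Z := by
      ext a
      simp only [hR₁, hA, Finset.mem_sdiff, Finset.mem_union]
      tauto
    obtain ⟨hcompsEq, hcompsDisj⟩ := compsOf_split (G := G) hv₀ hZC₀
    -- seed bounds for the new pieces
    have hnbrsZ : (nbrs G Z).card ≤ k * d :=
      le_trans (hdeg Z) (Nat.mul_le_mul_right d hZcard)
    have hseedR₁ : ∀ D ∈ compsOf G (C₀ \ Z),
        (nbrs G R₁ ∩ D).card ≤ (X ∩ D).card + (nbrs G Z ∩ D).card := by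
      intro D hD
      have : nbrs G R₁ ∩ D = (X ∩ D) ∪ (nbrs G Z ∩ D) := by
        rw [hR₁, nbrs_union]
        ext a
        simp only [Finset.mem_inter, Finset.mem_union]
        tauto
      rw [this]
      exact Finset.card_union_le _ _
    -- components of C₀ \ Z have half seed
    have hhalf : ∀ D ∈ compsOf G (C₀ \ Z), 2 * (X ∩ D).card ≤ s₀ := by
      intro D hD
      obtain ⟨v, hv, rfl⟩ := mem_compsOf.mp hD
      exact hbal' v hv
    -- total X-seed over the pieces
    have hXtot : ∑ D ∈ compsOf G (C₀ \ Z), (X ∩ D).card ≤ s₀ := by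
      have h1 : ∑ D ∈ compsOf G (C₀ \ Z), (X ∩ D).card
          = ∑ D ∈ compsOf G (C₀ \ Z), ((X ∩ C₀) ∩ D).card := by
        refine Finset.sum_congr rfl ?_
        intro D hD
        obtain ⟨v, hv, rfl⟩ := mem_compsOf.mp hD
        congr 1
        ext a
        simp only [Finset.mem_inter]
        constructor
        · rintro ⟨h1, h2⟩
          exact ⟨⟨h1, (Finset.mem_sdiff.mp (gcmp_subset h2)).1⟩, h2⟩
        · rintro ⟨⟨h1, _⟩, h2⟩; exact ⟨h1, h2⟩
      rw [h1, hs₀]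
      refine sum_card_inter_gcmp_le (G := G) (U := C₀ \ Z) _ _ ?_
      intro C hC
      obtain ⟨v, hv, rfl⟩ := mem_compsOf.mp hC
      exact ⟨v, rfl⟩
    have hZtot : ∑ D ∈ compsOf G (C₀ \ Z), (nbrs G Z ∩ D).card ≤ k * d := by
      refine le_trans ?_ hnbrsZ
      refine sum_card_inter_gcmp_le (G := G) (U := C₀ \ Z) _ _ ?_
      intro C hC
      obtain ⟨v, hv, rfl⟩ := mem_compsOf.mp hC
      exact ⟨v, rfl⟩
    -- the key numeric inequality for the new pieces
    have hkey : ∑ D ∈ compsOf G (C₀ \ Z), ((nbrs G R₁ ∩ D).card - 2 * (k * d)) + k * d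
        ≤ s₀ - 2 * (k * d) := by
      set 𝒩 := compsOf G (C₀ \ Z) with h𝒩
      have step1 : ∑ D ∈ 𝒩, ((nbrs G R₁ ∩ D).card - 2 * (k * d))
          ≤ ∑ D ∈ 𝒩, ((X ∩ D).card - 2 * (k * d)) + ∑ D ∈ 𝒩, (nbrs G Z ∩ D).card := by
        rw [← Finset.sum_add_distrib]
        refine Finset.sum_le_sum ?_
        intro D hD
        have := hseedR₁ D hD
        omega
      have step2 : ∑ D ∈ 𝒩, ((X ∩ D).card - 2 * (k * d)) + 2 * (k * d) ≤ s₀ - 2 * (k * d) := by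
        set P := 𝒩.filter (fun D => 2 * (k * d) < (X ∩ D).card) with hP
        have hPsub : P ⊆ 𝒩 := Finset.filter_subset _ _
        have hPsum : ∑ D ∈ 𝒩, ((X ∩ D).card - 2 * (k * d))
            = ∑ D ∈ P, ((X ∩ D).card - 2 * (k * d)) := by
          symm
          refine Finset.sum_subset hPsub ?_
          intro D hD hDP
          have : ¬ (2 * (k * d) < (X ∩ D).card) := by
            intro h
            exact hDP (Finset.mem_filter.mpr ⟨hD, h⟩)
          omega
        rw [hPsum]
        rcases Nat.lt_or_ge P.card 2 with hPc | hPc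
        · rcases Nat.lt_or_ge P.card 1 with hPc0 | hPc1
          · -- P empty
            have : P = ∅ := Finset.card_eq_zero.mp (by omega)
            rw [this]
            simp only [Finset.sum_empty]
            omega
          · -- P a singleton
            have hone : P.card = 1 := by omega
            obtain ⟨D₁, hD₁⟩ := Finset.card_eq_one.mp hone
            rw [hD₁, Finset.sum_singleton]
            have hD₁P : D₁ ∈ P := by rw [hD₁]; exact Finset.mem_singleton_self _
            have h2h := hhalf D₁ (hPsub hD₁P)
            omega
        · -- at least two heavy pieces
          have hsum_eq : ∑ D ∈ P, ((X ∩ D).card - 2 * (k * d)) + P.card * (2 * (k * d))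
              = ∑ D ∈ P, (X ∩ D).card := by
            rw [← Finset.sum_const_nat (m := 2 * (k * d)) (fun _ _ => rfl), ← Finset.sum_add_distrib]
            refine Finset.sum_congr rfl ?_
            intro D hD
            have := (Finset.mem_filter.mp hD).2
            omega
          have hsle : ∑ D ∈ P, (X ∩ D).card ≤ s₀ :=
            le_trans (Finset.sum_le_sum_of_subset hPsub) hXtot
          have hlink : 2 * (2 * (k * d)) ≤ P.card * (2 * (k * d)) :=
            Nat.mul_le_mul_right _ hPc
          omega
      have step3 := hZtot
      omega
    -- now compare the potentials
    have hΨnew : ∑ C ∈ compsOf G (U \ R₁), ((nbrs G R₁ ∩ C).card - 2 * (k * d)) + k * d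
        ≤ ∑ C ∈ compsOf G A, ((X ∩ C).card - 2 * (k * d)) := by
      rw [hUR₁, hcompsEq, Finset.sum_union hcompsDisj]
      simp only [← hC₀]
      have hrest : ∑ C ∈ (compsOf G A).erase C₀, ((nbrs G R₁ ∩ C).card - 2 * (k * d))
          = ∑ C ∈ (compsOf G A).erase C₀, ((X ∩ C).card - 2 * (k * d)) := by
        refine Finset.sum_congr rfl ?_
        intro C hC
        have hempty := nbrs_sep_other (G := G) hv₀ hZC₀ hC
        have : nbrs G R₁ ∩ C = X ∩ C := by
          rw [hR₁, nbrs_union]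
          ext a
          simp only [Finset.mem_inter, Finset.mem_union]
          constructor
          · rintro ⟨h1 | h1, h2⟩
            · exact ⟨h1, h2⟩
            · exfalso
              have : a ∈ nbrs G Z ∩ C := Finset.mem_inter.mpr ⟨h1, h2⟩
              rw [hempty] at this
              exact absurd this (Finset.notMem_empty a)
          · rintro ⟨h1, h2⟩; exact ⟨Or.inl h1, h2⟩
        rw [this]
      rw [hrest]
      have hC₀mem : C₀ ∈ compsOf G A := mem_compsOf.mpr ⟨v₀, hv₀, rfl⟩
      have htot : ∑ C ∈ compsOf G A, ((X ∩ C).card - 2 * (k * d))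
          = (s₀ - 2 * (k * d)) + ∑ C ∈ (compsOf G A).erase C₀, ((X ∩ C).card - 2 * (k * d)) := by
        rw [← Finset.add_sum_erase _ _ hC₀mem]
      rw [htot]
      omega
    -- apply the induction hypothesis
    have hΨ₁ : ∑ C ∈ compsOf G (U \ R₁), ((nbrs G R₁ ∩ C).card - 2 * (k * d)) ≤ p * (k * d) := by
      have := hΨ
      have hsucc : (p + 1) * (k * d) = p * (k * d) + k * d := by ring
      omega
    obtain ⟨R', hRR', hR'U, hR'card, hR'good⟩ := ih U R₁ hR₁U hΨ₁
    refine ⟨R', le_trans Finset.subset_union_left hRR', hR'U, ?_, hR'good⟩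
    have hcard₁ : R₁.card ≤ R.card + k := le_trans (Finset.card_union_le _ _) (by omega)
    calc R'.card ≤ R₁.card + k * p := hR'card
      _ ≤ R.card + k + k * p := by omega
      _ = R.card + k * (p + 1) := by ring

end Split

section Rec

variable {V : Type*} [Fintype V] {G : SimpleGraph V}

theorem rec_colour {k d : ℕ} (hk : 1 ≤ k) (hd : 1 ≤ d)
    (hSep : ∀ (U' : Finset V) (wt : V → ℕ), ∃ Z : Finset V, Z ⊆ U' ∧ Z.card ≤ k ∧
      ∀ v ∈ U' \ Z, 2 * ∑ w ∈ gcmp G (U' \ Z) v, wt w ≤ ∑ u ∈ U', wt u)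
    (hdeg : ∀ X : Finset V, (nbrs G X).card ≤ X.card * d) :
    ∀ (n : ℕ) (U : Finset V), U.card ≤ n → ∀ S : Finset V, S ⊆ U → S.card ≤ 6 * (k * d) →
    ∃ g : V → ℕ,
      (∀ v ∈ S, g v = 0) ∧
      (∀ u ∈ U, ∀ v ∈ U, G.Adj u v → g u ≤ g v + 1) ∧
      (∀ (m : ℕ) (M : Finset V), M ⊆ U → (∀ v ∈ M, g v = m) →
        (∀ u ∈ M, ∀ w ∈ M, RW G ↑M u w) → M.card ≤ 14 * (k * d)) := by
  classical
  have hbase : ∀ (U : Finset V), U.card ≤ 14 * (k * d) → ∀ S : Finset V, S ⊆ U →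
      ∃ g : V → ℕ,
      (∀ v ∈ S, g v = 0) ∧
      (∀ u ∈ U, ∀ v ∈ U, G.Adj u v → g u ≤ g v + 1) ∧
      (∀ (m : ℕ) (M : Finset V), M ⊆ U → (∀ v ∈ M, g v = m) →
        (∀ u ∈ M, ∀ w ∈ M, RW G ↑M u w) → M.card ≤ 14 * (k * d)) := by
    intro U hU S hSU
    refine ⟨fun _ => 0, fun _ _ => rfl, fun _ _ _ _ _ => Nat.zero_le _, ?_⟩
    intro m M hM hMm _
    rcases m with _ | m
    · exact le_trans (Finset.card_le_card hM) hU
    · have : M = ∅ := by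
        rw [Finset.eq_empty_iff_forall_notMem]
        intro v hv
        exact Nat.succ_ne_zero m (hMm v hv).symm
      rw [this]
      simp
  intro n
  induction n with
  | zero =>
    intro U hU S hSU hScard
    exact hbase U (by omega) S hSU
  | succ n ihn =>
    intro U hU S hSU hScard
    by_cases hsmall : U.card ≤ 14 * (k * d)
    · exact hbase U hsmall S hSU
    push_neg at hsmall
    have hkd : 1 ≤ k * d := Nat.one_le_iff_ne_zero.mpr (by positivity)
    have hUpos : 0 < U.card := by omega
    obtain ⟨u₀, hu₀⟩ := Finset.card_pos.mp hUpos
    set R₀ : Finset V := insert u₀ S with hR₀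
    have hR₀U : R₀ ⊆ U := Finset.insert_subset hu₀ hSU
    have hR₀card : R₀.card ≤ 6 * (k * d) + 1 := le_trans (Finset.card_insert_le _ _) (by omega)
    -- potential bound
    have hΨ : ∑ C ∈ compsOf G (U \ R₀), ((nbrs G R₀ ∩ C).card - 2 * (k * d)) ≤
        (7 * d) * (k * d) := by
      have h1 : ∑ C ∈ compsOf G (U \ R₀), ((nbrs G R₀ ∩ C).card - 2 * (k * d)) ≤
          ∑ C ∈ compsOf G (U \ R₀), (nbrs G R₀ ∩ C).card :=
        Finset.sum_le_sum (fun _ _ => Nat.sub_le _ _)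
      have h2 : ∑ C ∈ compsOf G (U \ R₀), (nbrs G R₀ ∩ C).card ≤ (nbrs G R₀).card := by
        refine sum_card_inter_gcmp_le (G := G) (U := U \ R₀) _ _ ?_
        intro C hC
        obtain ⟨v, hv, rfl⟩ := mem_compsOf.mp hC
        exact ⟨v, rfl⟩
      have h3 : (nbrs G R₀).card ≤ R₀.card * d := hdeg R₀
      have h4 : R₀.card * d ≤ (6 * (k * d) + 1) * d := Nat.mul_le_mul_right d hR₀card
      have h5 : (6 * (k * d) + 1) * d ≤ (7 * d) * (k * d) := by nlinarith
      omega
    obtain ⟨R', hR₀R', hR'U, hR'card, hseeds⟩ :=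
      split_lemma hk hd hSep hdeg (7 * d) U R₀ hR₀U hΨ
    have hR'card' : R'.card ≤ 14 * (k * d) := by
      have : k * (7 * d) = 7 * (k * d) := by ring
      omega
    have hu₀R' : u₀ ∈ R' := hR₀R' (Finset.mem_insert_self _ _)
    set A : Finset V := U \ R' with hA
    -- recursive data on each component
    have hrec : ∀ C ∈ compsOf G A, ∃ g : V → ℕ,
        (∀ v ∈ nbrs G R' ∩ C, g v = 0) ∧
        (∀ u ∈ C, ∀ v ∈ C, G.Adj u v → g u ≤ g v + 1) ∧
        (∀ (m : ℕ) (M : Finset V), M ⊆ C → (∀ v ∈ M, g v = m) →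
          (∀ u ∈ M, ∀ w ∈ M, RW G ↑M u w) → M.card ≤ 14 * (k * d)) := by
      intro C hC
      obtain ⟨v, hv, rfl⟩ := mem_compsOf.mp hC
      have hcardC : (gcmp G A v).card ≤ n := by
        have h1 : (gcmp G A v).card ≤ A.card := Finset.card_le_card gcmp_subset
        have h2 : A.card = U.card - R'.card := Finset.card_sdiff_of_subset hR'U
        have h3 : 1 ≤ R'.card := Finset.card_pos.mpr ⟨u₀, hu₀R'⟩
        omega
      exact ihn (gcmp G A v) hcardC (nbrs G R' ∩ gcmp G A v) Finset.inter_subset_right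
        (hseeds v hv)
    choose gf hgf0 hgfadj hgfM using hrec
    have hgf_irrel : ∀ (C C' : Finset V) (h : C ∈ compsOf G A) (h' : C' ∈ compsOf G A),
        C = C' → gf C h = gf C' h' := by
      rintro C C' h h' rfl
      rfl
    set g : V → ℕ := fun v =>
      if hv : v ∈ U \ R' then gf (gcmp G A v) (mem_compsOf.mpr ⟨v, hv, rfl⟩) v + 1 else 0
      with hg
    have hgA : ∀ v, (hv : v ∈ A) →
        g v = gf (gcmp G A v) (mem_compsOf.mpr ⟨v, hv, rfl⟩) v + 1 := by
      intro v hv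
      rw [hg]
      simp only
      rw [dif_pos (hA ▸ hv)]
    have hgnotA : ∀ v, v ∉ A → g v = 0 := by
      intro v hv
      rw [hg]
      simp only
      rw [dif_neg (fun h => hv (hA ▸ h))]
    -- values on a fixed component
    have hgC : ∀ v, (hv : v ∈ A) → ∀ w ∈ gcmp G A v,
        g w = gf (gcmp G A v) (mem_compsOf.mpr ⟨v, hv, rfl⟩) w + 1 := by
      intro v hv w hw
      have hwA : w ∈ A := gcmp_subset hw
      rw [hgA w hwA]
      have hCeq : gcmp G A w = gcmp G A v := gcmp_eq_of_mem hw
      rw [hgf_irrel _ _ _ _ hCeq]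
    refine ⟨g, ?_, ?_, ?_⟩
    · -- zero on S
      intro v hv
      have : v ∉ A := by
        intro hvA
        exact (Finset.mem_sdiff.mp (hA ▸ hvA)).2 (hR₀R' (Finset.mem_insert_of_mem hv))
      exact hgnotA v this
    · -- adjacency
      intro u hu v hv hadj
      by_cases huA : u ∈ A
      · by_cases hvA : v ∈ A
        · -- same component
          have hvC : v ∈ gcmp G A u := adj_mem_gcmp (self_mem_gcmp huA) hadj hvA
          have h1 := hgC u huA u (self_mem_gcmp huA)
          have h2 := hgC u huA v hvC
          have h3 := hgfadj (gcmp G A u) (mem_compsOf.mpr ⟨u, huA, rfl⟩) u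
            (self_mem_gcmp huA) v hvC hadj
          omega
        · -- v ∈ R'
          have hvR' : v ∈ R' := by
            by_contra hvR'
            exact hvA (Finset.mem_sdiff.mpr ⟨hv, hvR'⟩)
          have hu_seed : u ∈ nbrs G R' ∩ gcmp G A u :=
            Finset.mem_inter.mpr ⟨mem_nbrs.mpr ⟨v, hvR', hadj.symm⟩, self_mem_gcmp huA⟩
          have h1 := hgC u huA u (self_mem_gcmp huA)
          have h2 := hgf0 (gcmp G A u) (mem_compsOf.mpr ⟨u, huA, rfl⟩) u hu_seed
          have h3 := hgnotA v (by intro h; exact (Finset.mem_sdiff.mp h).2 hvR')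
          omega
      · have h0 := hgnotA u huA
        omega
    · -- connected monochromatic sets
      intro m M hM hMm hMrw
      rcases M.eq_empty_or_nonempty with rfl | hMne
      · simp
      obtain ⟨u₁, hu₁⟩ := hMne
      rcases m with _ | m
      · -- level 0 : inside R'
        have hMR' : M ⊆ R' := by
          intro v hv
          by_contra hvR'
          have hvA : v ∈ A := Finset.mem_sdiff.mpr ⟨hM hv, hvR'⟩
          have := hgA v hvA
          have := hMm v hv
          omega
        exact le_trans (Finset.card_le_card hMR') hR'card'
      · -- level m+1 : inside a single component
        have hMA : M ⊆ A := by
          intro v hv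
          by_contra hvA
          have := hgnotA v hvA
          have := hMm v hv
          omega
        have hu₁A : u₁ ∈ A := hMA hu₁
        have hMC : M ⊆ gcmp G A u₁ := by
          intro w hw
          refine mem_gcmp.mpr ?_
          refine (hMrw u₁ hu₁ w hw).mono ?_
          exact_mod_cast hMA
        refine hgfM (gcmp G A u₁) (mem_compsOf.mpr ⟨u₁, hu₁A, rfl⟩) m M hMC ?_ hMrw
        intro v hv
        have h1 := hgC u₁ hu₁A v (hMC hv)
        have h2 := hMm v hv
        omega

end Rec

section Factor

variable {V : Type*} [Fintype V] {G : SimpleGraph V}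

theorem factor_colour (t Δ : ℕ) (hΔ : 0 < Δ)
    (htw : TreewidthLE G t) (hdeg : ∀ v : V, (G.neighborSet v).ncard ≤ Δ) :
    ∃ f : V → Fin 2, ∀ M : Finset V,
      (∀ u ∈ M, ∀ v ∈ M, f u = f v) → (∀ u ∈ M, ∀ w ∈ M, RW G ↑M u w) →
      M.card ≤ 14 * ((t + 1) * Δ) := by
  classical
  obtain ⟨ι, T, Wb, hTree, hEdge, hTrace, hCard⟩ := htw
  -- the separator hypothesis
  have hSep : ∀ (U' : Finset V) (wt : V → ℕ), ∃ Z : Finset V, Z ⊆ U' ∧ Z.card ≤ t + 1 ∧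
      ∀ v ∈ U' \ Z, 2 * ∑ w ∈ gcmp G (U' \ Z) v, wt w ≤ ∑ u ∈ U', wt u := by
    intro U' wt
    obtain ⟨x, hx⟩ := exists_balanced_bag hTree hEdge hTrace U' wt
    refine ⟨Wb x ∩ U', Finset.inter_subset_right, ?_, ?_⟩
    · exact le_trans (Finset.card_le_card Finset.inter_subset_left) (hCard x)
    · have hset : U' \ (Wb x ∩ U') = U' \ Wb x := by
        ext a
        simp only [Finset.mem_sdiff, Finset.mem_inter]
        tauto
      rw [hset]
      exact hx
  have hdeg' : ∀ X : Finset V, (nbrs G X).card ≤ X.card * Δ := nbrs_card_le hdeg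
  have hk : 1 ≤ t + 1 := by omega
  obtain ⟨g, hg0, hgadj, hglvl⟩ := rec_colour hk hΔ hSep hdeg' Finset.univ.card Finset.univ
    (le_refl _) ∅ (Finset.empty_subset _) (by simp)
  refine ⟨fun v => ⟨g v % 2, Nat.mod_lt _ (by omega)⟩, ?_⟩
  intro M hmono hrw
  rcases M.eq_empty_or_nonempty with rfl | ⟨u₁, hu₁⟩
  · simp
  -- g is constant on M
  have hconst : ∀ w ∈ M, g w = g u₁ := by
    have hwalk : ∀ {a b : V} (p : G.Walk a b), (∀ x ∈ p.support, x ∈ (↑M : Set V)) →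
        g a = g b := by
      intro a b p
      induction p with
      | nil => intro _; rfl
      | @cons a' b' c' h q ih =>
        intro hsup
        have ha' : a' ∈ M := by
          have := hsup a' (by simp)
          exact_mod_cast this
        have hb' : b' ∈ M := by
          have := hsup b' (by simp [Walk.support_cons])
          exact_mod_cast this
        have hpar : g a' % 2 = g b' % 2 := by
          have := hmono a' ha' b' hb'
          simpa using congrArg Fin.val this
        have h1 := hgadj a' (Finset.mem_univ _) b' (Finset.mem_univ _) h
        have h2 := hgadj b' (Finset.mem_univ _) a' (Finset.mem_univ _) h.symm
        have hab : g a' = g b' := by omega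
        rw [hab]
        exact ih (fun x hx => hsup x (by simp [Walk.support_cons]; tauto))
    intro w hw
    obtain ⟨p, hp⟩ := hrw w hw u₁ hu₁
    exact hwalk p hp
  exact hglvl (g u₁) M (Finset.subset_univ _) hconst hrw

end Factor

section Proj

variable {V₁ : Type u} {V₂ : Type v} {H₁ : SimpleGraph V₁} {H₂ : SimpleGraph V₂}

theorem proj_walk_fst (S : Finset (V₁ × V₂)) :
    ∀ {p q : V₁ × V₂} (w : (StrongProd H₁ H₂).Walk p q),
      (∀ x ∈ w.support, x ∈ (↑S : Set (V₁ × V₂))) →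
      RW H₁ ↑(S.image Prod.fst) p.1 q.1 := by
  intro p q w
  induction w with
  | nil =>
    rename_i u
    intro hsup
    refine RW.refl ?_
    have : u ∈ S := by exact_mod_cast hsup u (by simp)
    exact_mod_cast Finset.mem_image_of_mem Prod.fst this
  | @cons a b c h q ih =>
    intro hsup
    have ha : a ∈ S := by exact_mod_cast hsup a (by simp)
    have hrest : ∀ x ∈ q.support, x ∈ (↑S : Set (V₁ × V₂)) := by
      intro x hx
      exact hsup x (by simp [Walk.support_cons]; tauto)
    have hb1 := ih hrest
    rcases h with ⟨h1, _⟩ | ⟨_, h1⟩ | ⟨h1, _⟩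
    · rwa [h1]
    · exact RW.cons h1 (by exact_mod_cast Finset.mem_image_of_mem Prod.fst ha) hb1
    · exact RW.cons h1 (by exact_mod_cast Finset.mem_image_of_mem Prod.fst ha) hb1

theorem proj_walk_snd (S : Finset (V₁ × V₂)) :
    ∀ {p q : V₁ × V₂} (w : (StrongProd H₁ H₂).Walk p q),
      (∀ x ∈ w.support, x ∈ (↑S : Set (V₁ × V₂))) →
      RW H₂ ↑(S.image Prod.snd) p.2 q.2 := by
  intro p q w
  induction w with
  | nil =>
    rename_i u
    intro hsup
    refine RW.refl ?_
    have : u ∈ S := by exact_mod_cast hsup u (by simp)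
    exact_mod_cast Finset.mem_image_of_mem Prod.snd this
  | @cons a b c h q ih =>
    intro hsup
    have ha : a ∈ S := by exact_mod_cast hsup a (by simp)
    have hrest : ∀ x ∈ q.support, x ∈ (↑S : Set (V₁ × V₂)) := by
      intro x hx
      exact hsup x (by simp [Walk.support_cons]; tauto)
    have hb1 := ih hrest
    rcases h with ⟨_, h1⟩ | ⟨h1, _⟩ | ⟨_, h1⟩
    · exact RW.cons h1 (by exact_mod_cast Finset.mem_image_of_mem Prod.snd ha) hb1
    · rwa [h1]
    · exact RW.cons h1 (by exact_mod_cast Finset.mem_image_of_mem Prod.snd ha) hb1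

end Proj

/-- There is an absolute constant `C` such that for all positive `t, Δ` and graphs
`H₁, H₂` of treewidth at most `t` and maximum degree at most `Δ`, the strong product
`H₁ ⊠ H₂` has a 4-colouring with every monochromatic component of size at most
`C·t²·Δ²`. -/
theorem bounded_degree_four_colour :
    ∃ C : ℝ, 0 < C ∧ ∀ t Δ : ℕ, 0 < t → 0 < Δ →
      ∀ (V₁ V₂ : Type) [Fintype V₁] [Fintype V₂]
        (H₁ : SimpleGraph V₁) (H₂ : SimpleGraph V₂),
        TreewidthLE H₁ t → TreewidthLE H₂ t →
        (∀ v : V₁, (H₁.neighborSet v).ncard ≤ Δ) →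
        (∀ v : V₂, (H₂.neighborSet v).ncard ≤ Δ) →
        ∃ f : V₁ × V₂ → Fin 4, ClusterLEReal (StrongProd H₁ H₂) f
          (C * (t : ℝ) ^ 2 * (Δ : ℝ) ^ 2) := by
  classical
  refine ⟨784, by norm_num, ?_⟩
  intro t Δ ht hΔ V₁ V₂ _ _ H₁ H₂ htw₁ htw₂ hdeg₁ hdeg₂
  obtain ⟨f₁, hf₁⟩ := factor_colour (G := H₁) t Δ hΔ htw₁ hdeg₁
  obtain ⟨f₂, hf₂⟩ := factor_colour (G := H₂) t Δ hΔ htw₂ hdeg₂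
  refine ⟨fun p => ⟨2 * (f₁ p.1).val + (f₂ p.2).val, by
    have h1 := (f₁ p.1).isLt
    have h2 := (f₂ p.2).isLt
    omega⟩, ?_⟩
  intro S hmono hconn
  set M₁ := S.image Prod.fst with hM₁
  set M₂ := S.image Prod.snd with hM₂
  -- reachability within S
  have hRW : ∀ u ∈ S, ∀ v ∈ S, RW (StrongProd H₁ H₂) ↑S u v := by
    intro u hu v hv
    exact rw_of_induce_connected hconn (by exact_mod_cast hu) (by exact_mod_cast hv)
  -- values agree on projections
  have hval : ∀ u ∈ S, ∀ v ∈ S, f₁ u.1 = f₁ v.1 ∧ f₂ u.2 = f₂ v.2 := by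
    intro u hu v hv
    have := hmono u hu v hv
    have hvv := congrArg Fin.val this
    simp only at hvv
    have h1 := (f₁ u.1).isLt
    have h2 := (f₂ u.2).isLt
    have h3 := (f₁ v.1).isLt
    have h4 := (f₂ v.2).isLt
    constructor
    · apply Fin.ext; omega
    · apply Fin.ext; omega
  -- S is nonempty or trivial
  rcases S.eq_empty_or_nonempty with rfl | hSne
  · simp
    positivity
  -- bound the projections
  have hb₁ : M₁.card ≤ 14 * ((t + 1) * Δ) := by
    refine hf₁ M₁ ?_ ?_
    · intro a ha b hb
      obtain ⟨pa, hpa, rfl⟩ := Finset.mem_image.mp ha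
      obtain ⟨pb, hpb, rfl⟩ := Finset.mem_image.mp hb
      exact (hval pa hpa pb hpb).1
    · intro a ha b hb
      obtain ⟨pa, hpa, rfl⟩ := Finset.mem_image.mp ha
      obtain ⟨pb, hpb, rfl⟩ := Finset.mem_image.mp hb
      obtain ⟨w, hw⟩ := hRW pa hpa pb hpb
      exact proj_walk_fst S w hw
  have hb₂ : M₂.card ≤ 14 * ((t + 1) * Δ) := by
    refine hf₂ M₂ ?_ ?_
    · intro a ha b hb
      obtain ⟨pa, hpa, rfl⟩ := Finset.mem_image.mp ha
      obtain ⟨pb, hpb, rfl⟩ := Finset.mem_image.mp hb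
      exact (hval pa hpa pb hpb).2
    · intro a ha b hb
      obtain ⟨pa, hpa, rfl⟩ := Finset.mem_image.mp ha
      obtain ⟨pb, hpb, rfl⟩ := Finset.mem_image.mp hb
      obtain ⟨w, hw⟩ := hRW pa hpa pb hpb
      exact proj_walk_snd S w hw
  -- S is inside the product of projections
  have hprod : S.card ≤ M₁.card * M₂.card := by
    have hsub : S ⊆ M₁ ×ˢ M₂ := by
      intro p hp
      exact Finset.mem_product.mpr
        ⟨Finset.mem_image_of_mem Prod.fst hp, Finset.mem_image_of_mem Prod.snd hp⟩
    calc S.card ≤ (M₁ ×ˢ M₂).card := Finset.card_le_card hsub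
      _ = M₁.card * M₂.card := Finset.card_product _ _
  -- numeric conclusion
  have hnat : S.card ≤ 784 * t ^ 2 * Δ ^ 2 := by
    have htt : t + 1 ≤ 2 * t := by omega
    have h1 : M₁.card * M₂.card ≤ (14 * ((t + 1) * Δ)) * (14 * ((t + 1) * Δ)) :=
      Nat.mul_le_mul hb₁ hb₂
    have hB : 14 * ((t + 1) * Δ) ≤ 14 * ((2 * t) * Δ) :=
      Nat.mul_le_mul_left 14 (Nat.mul_le_mul_right Δ htt)
    have h2 : (14 * ((t + 1) * Δ)) * (14 * ((t + 1) * Δ)) ≤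
        (14 * ((2 * t) * Δ)) * (14 * ((2 * t) * Δ)) := Nat.mul_le_mul hB hB
    have h3 : (14 * ((2 * t) * Δ)) * (14 * ((2 * t) * Δ)) = 784 * t ^ 2 * Δ ^ 2 := by ring
    omega
  calc (S.card : ℝ) ≤ ((784 * t ^ 2 * Δ ^ 2 : ℕ) : ℝ) := by exact_mod_cast hnat
    _ = 784 * (t : ℝ) ^ 2 * (Δ : ℝ) ^ 2 := by push_cast; ring
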